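/- Let L, K be positive integers, let π*, π'* ∈ Δ^{L-1} (open simplex), let φ* be an L×K matrix whose rows lie in the open simplex Δ^{K-1} with rank L, and let 0 < ρ₁ ≤ ρ₂. For weight data (b, d, ρ) with b an L×K matrix of nonnegative reals summing to 1, d ∈ Δ̄^{K-1}, and ρ ∈ [ρ₁, ρ₂], define H_{b,d,ρ}(π, π', φ) = Σ_{l,k} b_{lk} log(π_l φ_{lk}) + ρ Σ_k d_k log(Σ_l π'_l φ_{lk}) on Θ = Δ̄^{L-1} × Δ̄^{L-1} × (Δ̄^{K-1})^L, with values in [−∞, ∞) under the convention log 0 = −∞. Then for every ε > 0 there exists η > 0 such that for all (b, d, ρ) with max_{l,k} |b_{lk} − π*_l φ*_{lk}| < η, max_k |d_k − (φ*^T π'*)_k| < η, and ρ ∈ [ρ₁, ρ₂], every maximizer (π̂, π̂', φ̂) of H_{b,d,ρ} over Θ satisfies ‖(π̂, π̂', φ̂) − (π*, π'*, φ*)‖ < ε. -/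

import Mathlib

open Finset

/-- The open simplex: vectors with strictly positive entries summing to 1. -/
def openSimplex {n : ℕ} (v : Fin n → ℝ) : Prop :=
  (∀ i, 0 < v i) ∧ ∑ i, v i = 1

/-- The closed simplex: vectors with nonnegative entries summing to 1. -/
def closedSimplex {n : ℕ} (v : Fin n → ℝ) : Prop :=
  (∀ i, 0 ≤ v i) ∧ ∑ i, v i = 1

/-- Extended-real logarithm with the convention `log 0 = -∞`. -/
noncomputable def elog (x : ℝ) : EReal :=
  if x = 0 then ⊥ else ((Real.log x : ℝ) : EReal)

/-- The parameter space `Θ = Δ̄^{L-1} × Δ̄^{L-1} × (Δ̄^{K-1})^L`. -/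
def paramSpace (L K : ℕ) :
    Set ((Fin L → ℝ) × (Fin L → ℝ) × (Fin L → Fin K → ℝ)) :=
  {θ | closedSimplex θ.1 ∧ closedSimplex θ.2.1 ∧ ∀ l, closedSimplex (θ.2.2 l)}

/-- The weighted objective
`H_{b,d,ρ}(π, π', φ) = Σ_{l,k} b_{lk} log(π_l φ_{lk}) + ρ Σ_k d_k log(Σ_l π'_l φ_{lk})`,
valued in the extended reals with `log 0 = -∞`. -/
noncomputable def weightedObjective (L K : ℕ)
    (b : Fin L → Fin K → ℝ) (d : Fin K → ℝ) (ρ : ℝ)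
    (θ : (Fin L → ℝ) × (Fin L → ℝ) × (Fin L → Fin K → ℝ)) : EReal :=
  (∑ l, ∑ k, ((b l k : ℝ) : EReal) * elog (θ.1 l * θ.2.2 l k)) +
  ((ρ : ℝ) : EReal) * ∑ k, ((d k : ℝ) : EReal) * elog (∑ l, θ.2.1 l * θ.2.2 l k)

/-! ### elog basics -/

lemma elog_of_pos {x : ℝ} (hx : 0 < x) : elog x = ((Real.log x : ℝ) : EReal) :=
  if_neg hx.ne'

lemma elog_zero : elog 0 = ⊥ := if_pos rfl

lemma elog_ne_top (x : ℝ) : elog x ≠ ⊤ := by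
  unfold elog; split <;> simp

lemma ereal_coe_sum {ι : Type*} (s : Finset ι) (f : ι → ℝ) :
    ((∑ i ∈ s, f i : ℝ) : EReal) = ∑ i ∈ s, (f i : EReal) :=
  map_sum (⟨⟨(fun x : ℝ => (x : EReal)), EReal.coe_zero⟩, EReal.coe_add⟩ : ℝ →+ EReal) f s

lemma coe_mul_elog_ne_top {c x : ℝ} (hc : 0 ≤ c) : (c : EReal) * elog x ≠ ⊤ := by
  unfold elog
  split
  · rcases eq_or_lt_of_le hc with h | h
    · simp [← h]
    · simp [EReal.coe_mul_bot_of_pos h]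
  · rw [← EReal.coe_mul]; exact EReal.coe_ne_top _

lemma ereal_sum_ne_top {ι : Type*} {s : Finset ι} {f : ι → EReal}
    (h : ∀ i ∈ s, f i ≠ ⊤) : ∑ i ∈ s, f i ≠ ⊤ := by
  classical
  induction s using Finset.induction_on with
  | empty => simp
  | insert _ _ hx ih =>
    rw [Finset.sum_insert hx]
    exact (EReal.add_lt_top (h _ (Finset.mem_insert_self _ _))
      (ih fun i hi => h i (Finset.mem_insert_of_mem hi))).ne

/-! ### Gibbs' inequality -/

lemma gibbs_real_le {ι : Type*} [Fintype ι] {p q : ι → ℝ}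
    (hp : ∀ i, 0 < p i) (hq : ∀ i, 0 < q i) (hs : ∑ i, q i ≤ ∑ i, p i) :
    ∑ i, p i * Real.log (q i) ≤ ∑ i, p i * Real.log (p i) := by
  have key : ∀ i ∈ Finset.univ (α := ι),
      p i * Real.log (q i) ≤ p i * Real.log (p i) + (q i - p i) := by
    intro i _
    have h1 : Real.log (q i) - Real.log (p i) = Real.log (q i / p i) :=
      (Real.log_div (hq i).ne' (hp i).ne').symm
    have h2 : Real.log (q i / p i) ≤ q i / p i - 1 :=
      Real.log_le_sub_one_of_pos (div_pos (hq i) (hp i))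
    have h3 : p i * (q i / p i - 1) = q i - p i := by
      rw [mul_sub, mul_div_cancel₀ _ (hp i).ne', mul_one]
    nlinarith [mul_le_mul_of_nonneg_left h2 (hp i).le, (hp i)]
  have := Finset.sum_le_sum key
  rw [Finset.sum_add_distrib, Finset.sum_sub_distrib] at this
  linarith

lemma gibbs_real_lt {ι : Type*} [Fintype ι] {p q : ι → ℝ}
    (hp : ∀ i, 0 < p i) (hq : ∀ i, 0 < q i) (hs : ∑ i, q i ≤ ∑ i, p i)
    {i₀ : ι} (hne : q i₀ ≠ p i₀) :
    ∑ i, p i * Real.log (q i) < ∑ i, p i * Real.log (p i) := by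
  have key : ∀ i ∈ Finset.univ (α := ι),
      p i * Real.log (q i) ≤ p i * Real.log (p i) + (q i - p i) := by
    intro i _
    have h1 : Real.log (q i) - Real.log (p i) = Real.log (q i / p i) :=
      (Real.log_div (hq i).ne' (hp i).ne').symm
    have h2 : Real.log (q i / p i) ≤ q i / p i - 1 :=
      Real.log_le_sub_one_of_pos (div_pos (hq i) (hp i))
    have h3 : p i * (q i / p i - 1) = q i - p i := by
      rw [mul_sub, mul_div_cancel₀ _ (hp i).ne', mul_one]
    nlinarith [mul_le_mul_of_nonneg_left h2 (hp i).le, (hp i)]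
  have keystrict : p i₀ * Real.log (q i₀) < p i₀ * Real.log (p i₀) + (q i₀ - p i₀) := by
    have h1 : Real.log (q i₀) - Real.log (p i₀) = Real.log (q i₀ / p i₀) :=
      (Real.log_div (hq i₀).ne' (hp i₀).ne').symm
    have hne1 : q i₀ / p i₀ ≠ 1 := by
      intro hc
      exact hne (by rwa [div_eq_one_iff_eq (hp i₀).ne'] at hc)
    have h2 : Real.log (q i₀ / p i₀) < q i₀ / p i₀ - 1 :=
      Real.log_lt_sub_one_of_pos (div_pos (hq i₀) (hp i₀)) hne1
    have h3 : p i₀ * (q i₀ / p i₀ - 1) = q i₀ - p i₀ := by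
      rw [mul_sub, mul_div_cancel₀ _ (hp i₀).ne', mul_one]
    nlinarith [mul_lt_mul_of_pos_left h2 (hp i₀), (hp i₀)]
  have hlt := Finset.sum_lt_sum key ⟨i₀, Finset.mem_univ i₀, keystrict⟩
  rw [Finset.sum_add_distrib, Finset.sum_sub_distrib] at hlt
  linarith

/-- The EReal sum `∑ p i * elog (q i)` as a real number when all `q i > 0`. -/
lemma sum_coe_mul_elog_pos {ι : Type*} [Fintype ι] {p q : ι → ℝ} (hq : ∀ i, 0 < q i) :
    ∑ i, (p i : EReal) * elog (q i) = ((∑ i, p i * Real.log (q i) : ℝ) : EReal) := by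
  rw [ereal_coe_sum]
  refine Finset.sum_congr rfl fun i _ => ?_
  rw [elog_of_pos (hq i), ← EReal.coe_mul]

/-- If some `q i = 0` then the EReal sum is `⊥`. -/
lemma sum_coe_mul_elog_bot {ι : Type*} [Fintype ι] {p q : ι → ℝ} (hp : ∀ i, 0 < p i)
    {i₀ : ι} (h0 : q i₀ = 0) :
    ∑ i, (p i : EReal) * elog (q i) = ⊥ := by
  classical
  rw [← Finset.add_sum_erase _ _ (Finset.mem_univ i₀), h0, elog_zero,
    EReal.coe_mul_bot_of_pos (hp i₀), EReal.bot_add]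

lemma gibbs_ereal_le {ι : Type*} [Fintype ι] {p q : ι → ℝ}
    (hp : ∀ i, 0 < p i) (hq : ∀ i, 0 ≤ q i) (hs : ∑ i, q i ≤ ∑ i, p i) :
    ∑ i, (p i : EReal) * elog (q i) ≤ ∑ i, (p i : EReal) * elog (p i) := by
  by_cases hq' : ∀ i, 0 < q i
  · rw [sum_coe_mul_elog_pos hq', sum_coe_mul_elog_pos hp]
    exact EReal.coe_le_coe_iff.2 (gibbs_real_le hp hq' hs)
  · push_neg at hq'
    obtain ⟨i₀, hi₀⟩ := hq'
    have h0 : q i₀ = 0 := le_antisymm hi₀ (hq i₀)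
    rw [sum_coe_mul_elog_bot hp h0]
    exact bot_le

lemma gibbs_ereal_eq {ι : Type*} [Fintype ι] {p q : ι → ℝ}
    (hp : ∀ i, 0 < p i) (hq : ∀ i, 0 ≤ q i) (hs : ∑ i, q i ≤ ∑ i, p i)
    (h : ∑ i, (p i : EReal) * elog (p i) ≤ ∑ i, (p i : EReal) * elog (q i)) :
    q = p := by
  by_contra hne
  have hq' : ∀ i, 0 < q i := by
    by_contra hq'
    push_neg at hq'
    obtain ⟨i₀, hi₀⟩ := hq'
    have h0 : q i₀ = 0 := le_antisymm hi₀ (hq i₀)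
    rw [sum_coe_mul_elog_bot hp h0, le_bot_iff, sum_coe_mul_elog_pos hp] at h
    exact EReal.coe_ne_bot _ h
  obtain ⟨i₀, hi₀⟩ := Function.ne_iff.mp hne
  have := gibbs_real_lt hp hq' hs hi₀
  rw [sum_coe_mul_elog_pos hq', sum_coe_mul_elog_pos hp, EReal.coe_le_coe_iff] at h
  linarith

/-! ### EReal case helper -/

lemma ereal_eq_bot_or_coe {x : EReal} (h : x ≠ ⊤) : x = ⊥ ∨ ∃ a : ℝ, x = (a : EReal) := by
  induction x using EReal.rec with
  | bot => exact Or.inl rfl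
  | coe a => exact Or.inr ⟨a, rfl⟩
  | top => exact absurd rfl h

/-! ### Uniqueness of the population maximizer -/

lemma unique_max (L K : ℕ) (hL : 0 < L)
    (πstar π'star : Fin L → ℝ) (φstar : Fin L → Fin K → ℝ)
    (hπ : openSimplex πstar) (hπ' : openSimplex π'star)
    (hφ : ∀ l, openSimplex (φstar l))
    (hrank : (Matrix.of φstar).rank = L)
    (ρ : ℝ) (hρ : 0 < ρ)
    (θ : (Fin L → ℝ) × (Fin L → ℝ) × (Fin L → Fin K → ℝ)) (hθ : θ ∈ paramSpace L K)
    (hge : weightedObjective L K (fun l k => πstar l * φstar l k)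
        (fun k => ∑ l, φstar l k * π'star l) ρ (πstar, π'star, φstar)
      ≤ weightedObjective L K (fun l k => πstar l * φstar l k)
        (fun k => ∑ l, φstar l k * π'star l) ρ θ) :
    θ = (πstar, π'star, φstar) := by
  have hLne : Nonempty (Fin L) := Fin.pos_iff_nonempty.mp hL
  obtain ⟨⟨h1n, h1s⟩, ⟨h2n, h2s⟩, h3⟩ := hθ
  -- Gibbs data for the first term
  set p1 : Fin L × Fin K → ℝ := fun x => πstar x.1 * φstar x.1 x.2 with hp1def
  set q1 : Fin L × Fin K → ℝ := fun x => θ.1 x.1 * θ.2.2 x.1 x.2 with hq1def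
  have hp1 : ∀ x, 0 < p1 x := fun x => mul_pos (hπ.1 x.1) ((hφ x.1).1 x.2)
  have hq1 : ∀ x, 0 ≤ q1 x := fun x => mul_nonneg (h1n x.1) ((h3 x.1).1 x.2)
  have hsum1 : ∀ (u : Fin L → ℝ) (v : Fin L → Fin K → ℝ),
      (∑ l, u l = 1) → (∀ l, ∑ k, v l k = 1) →
      ∑ x : Fin L × Fin K, u x.1 * v x.1 x.2 = 1 := by
    intro u v hu hv
    rw [Fintype.sum_prod_type]
    calc ∑ l, ∑ k, u l * v l k = ∑ l, u l * ∑ k, v l k := by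
          refine Finset.sum_congr rfl fun l _ => ?_; rw [Finset.mul_sum]
      _ = ∑ l, u l := by refine Finset.sum_congr rfl fun l _ => ?_; rw [hv l, mul_one]
      _ = 1 := hu
  have hsp1 : ∑ x, p1 x = 1 := hsum1 πstar φstar hπ.2 (fun l => (hφ l).2)
  have hsq1 : ∑ x, q1 x = 1 := hsum1 θ.1 θ.2.2 h1s (fun l => (h3 l).2)
  -- Gibbs data for the second term
  set p2 : Fin K → ℝ := fun k => ∑ l, φstar l k * π'star l with hp2def
  set q2 : Fin K → ℝ := fun k => ∑ l, θ.2.1 l * θ.2.2 l k with hq2def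
  have hp2 : ∀ k, 0 < p2 k :=
    fun k => Finset.sum_pos (fun l _ => mul_pos ((hφ l).1 k) (hπ'.1 l)) Finset.univ_nonempty
  have hq2 : ∀ k, 0 ≤ q2 k :=
    fun k => Finset.sum_nonneg fun l _ => mul_nonneg (h2n l) ((h3 l).1 k)
  have hsp2 : ∑ k, p2 k = 1 := by
    rw [Finset.sum_comm]
    calc ∑ l, ∑ k, φstar l k * π'star l = ∑ l, π'star l := by
          refine Finset.sum_congr rfl fun l _ => ?_
          rw [← Finset.sum_mul, (hφ l).2, one_mul]
      _ = 1 := hπ'.2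
  have hsq2 : ∑ k, q2 k = 1 := by
    rw [Finset.sum_comm]
    calc ∑ l, ∑ k, θ.2.1 l * θ.2.2 l k = ∑ l, θ.2.1 l := by
          refine Finset.sum_congr rfl fun l _ => ?_
          rw [← Finset.mul_sum, (h3 l).2, mul_one]
      _ = 1 := h2s
  -- rewrite the objective values
  have hobjθ : weightedObjective L K (fun l k => πstar l * φstar l k)
      (fun k => ∑ l, φstar l k * π'star l) ρ θ
      = (∑ x : Fin L × Fin K, (p1 x : EReal) * elog (q1 x)) +
        (ρ : EReal) * ∑ k, (p2 k : EReal) * elog (q2 k) := by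
    rw [weightedObjective, Fintype.sum_prod_type]
  have hobjstar : weightedObjective L K (fun l k => πstar l * φstar l k)
      (fun k => ∑ l, φstar l k * π'star l) ρ (πstar, π'star, φstar)
      = (∑ x : Fin L × Fin K, (p1 x : EReal) * elog (p1 x)) +
        (ρ : EReal) * ∑ k, (p2 k : EReal) * elog (p2 k) := by
    rw [weightedObjective, Fintype.sum_prod_type]
    simp only [hp1def, hp2def]
    have hcomm : ∀ k, ∑ l, π'star l * φstar l k = ∑ l, φstar l k * π'star l :=
      fun k => Finset.sum_congr rfl fun l _ => mul_comm _ _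
    simp only [hcomm]
  rw [hobjθ, hobjstar] at hge
  rw [sum_coe_mul_elog_pos hp1, sum_coe_mul_elog_pos hp2] at hge
  set aStar : ℝ := ∑ x, p1 x * Real.log (p1 x)
  set rStar : ℝ := ∑ k, p2 k * Real.log (p2 k)
  -- case analysis on the two EReal sums at θ
  have hAne : (∑ x : Fin L × Fin K, (p1 x : EReal) * elog (q1 x)) ≠ ⊤ :=
    ereal_sum_ne_top fun x _ => coe_mul_elog_ne_top (hp1 x).le
  have hBne : (∑ k, (p2 k : EReal) * elog (q2 k)) ≠ ⊤ :=
    ereal_sum_ne_top fun k _ => coe_mul_elog_ne_top (hp2 k).le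
  rcases ereal_eq_bot_or_coe hAne with hA | ⟨a, hA⟩
  · rw [hA, EReal.bot_add, le_bot_iff] at hge
    rw [← EReal.coe_mul, ← EReal.coe_add] at hge
    exact absurd hge (EReal.coe_ne_bot _)
  rcases ereal_eq_bot_or_coe hBne with hB | ⟨r, hB⟩
  · rw [hB, EReal.coe_mul_bot_of_pos hρ, EReal.add_bot, le_bot_iff] at hge
    rw [← EReal.coe_mul, ← EReal.coe_add] at hge
    exact absurd hge (EReal.coe_ne_bot _)
  rw [hA, hB, ← EReal.coe_mul, ← EReal.coe_add, ← EReal.coe_mul, ← EReal.coe_add,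
    EReal.coe_le_coe_iff] at hge
  have hAle : (a : EReal) ≤ (aStar : EReal) := by
    rw [← hA, ← sum_coe_mul_elog_pos hp1]
    exact gibbs_ereal_le hp1 hq1 (by rw [hsp1, hsq1])
  have hBle : (r : EReal) ≤ (rStar : EReal) := by
    rw [← hB, ← sum_coe_mul_elog_pos hp2]
    exact gibbs_ereal_le hp2 hq2 (by rw [hsp2, hsq2])
  rw [EReal.coe_le_coe_iff] at hAle hBle
  have haa : aStar ≤ a := by nlinarith
  have hrr : rStar ≤ r := by nlinarith
  -- equality in both Gibbs inequalities
  have hq1p1 : q1 = p1 := by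
    refine gibbs_ereal_eq hp1 hq1 (by rw [hsp1, hsq1]) ?_
    rw [sum_coe_mul_elog_pos hp1, hA]
    exact EReal.coe_le_coe_iff.2 haa
  have hq2p2 : q2 = p2 := by
    refine gibbs_ereal_eq hp2 hq2 (by rw [hsp2, hsq2]) ?_
    rw [sum_coe_mul_elog_pos hp2, hB]
    exact EReal.coe_le_coe_iff.2 hrr
  -- extract the component identities
  have hπeq : ∀ l, θ.1 l = πstar l := by
    intro l
    have hsum : ∑ k, q1 (l, k) = ∑ k, p1 (l, k) := by rw [hq1p1]
    simp only [hp1def, hq1def] at hsum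
    rw [← Finset.mul_sum, ← Finset.mul_sum, (h3 l).2, (hφ l).2, mul_one, mul_one] at hsum
    exact hsum
  have hφeq : ∀ l k, θ.2.2 l k = φstar l k := by
    intro l k
    have := congrFun hq1p1 (l, k)
    simp only [hp1def, hq1def, hπeq l] at this
    exact mul_left_cancel₀ (hπ.1 l).ne' this
  have hφfun : θ.2.2 = φstar := funext fun l => funext fun k => hφeq l k
  -- injectivity from the rank hypothesis
  have hπ'eq : θ.2.1 = π'star := by
    set M : Matrix (Fin K) (Fin L) ℝ := (Matrix.of φstar).transpose with hMdef
    have hinj : Function.Injective M.mulVecLin := by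
      have h1 : M.rank = L := by rw [hMdef, Matrix.rank_transpose]; exact hrank
      have h2 := LinearMap.finrank_range_add_finrank_ker M.mulVecLin
      rw [Matrix.rank] at h1
      rw [h1, show Module.finrank ℝ (Fin L → ℝ) = L by simp] at h2
      have h4 : Module.finrank ℝ (LinearMap.ker M.mulVecLin) = 0 := by omega
      rw [← LinearMap.ker_eq_bot]
      exact Submodule.finrank_eq_zero.mp h4
    apply hinj
    ext k
    have := congrFun hq2p2 k
    simp only [hp2def, hq2def, hφfun] at this
    simp only [Matrix.mulVecLin_apply, Matrix.mulVec, dotProduct,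
      Matrix.transpose_apply, Matrix.of_apply, hMdef]
    calc ∑ l, φstar l k * θ.2.1 l = ∑ l, θ.2.1 l * φstar l k := by
          exact Finset.sum_congr rfl fun l _ => mul_comm _ _
      _ = ∑ l, φstar l k * π'star l := this
      _ = ∑ l, φstar l k * π'star l := rfl
  exact Prod.ext (funext hπeq) (Prod.ext hπ'eq hφfun)

/-! ### Continuity lemmas -/

open Filter Topology

lemma tendsto_elog {f : ℕ → ℝ} {x : ℝ} (hf : ∀ n, 0 ≤ f n)
    (hx : Filter.Tendsto f atTop (nhds x)) :
    Filter.Tendsto (fun n => elog (f n)) atTop (nhds (elog x)) := by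
  have hx0 : 0 ≤ x := le_of_tendsto_of_tendsto' tendsto_const_nhds hx hf
  rcases eq_or_lt_of_le hx0 with h0 | hpos
  · -- x = 0 : tendsto ⊥
    rw [← h0, elog_zero]
    rw [EReal.tendsto_nhds_bot_iff_real]
    intro M
    have hev : ∀ᶠ n in atTop, f n < Real.exp M :=
      (tendsto_order.mp hx).2 _ (by rw [← h0]; exact Real.exp_pos M)
    filter_upwards [hev] with n hn
    rcases eq_or_lt_of_le (hf n) with h | h
    · rw [← h, elog_zero]; exact bot_lt_iff_ne_bot.mpr (by simp)
    · rw [elog_of_pos h]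
      exact_mod_cast EReal.coe_lt_coe_iff.2 ((Real.log_lt_iff_lt_exp h).mpr hn)
  · -- x > 0
    have hev : ∀ᶠ n in atTop, 0 < f n := (tendsto_order.mp hx).1 0 hpos
    rw [elog_of_pos hpos]
    have h1 : Filter.Tendsto (fun n => ((Real.log (f n) : ℝ) : EReal)) atTop
        (nhds ((Real.log x : ℝ) : EReal)) :=
      EReal.tendsto_coe.2 ((Real.continuousAt_log hpos.ne').tendsto.comp hx)
    refine h1.congr' ?_
    filter_upwards [hev] with n hn
    rw [elog_of_pos hn]

lemma tendsto_coe_mul {c : ℕ → ℝ} {c₀ : ℝ} (hc₀ : c₀ ≠ 0)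
    (hc : Filter.Tendsto c atTop (nhds c₀))
    {u : ℕ → EReal} {S : EReal} (hu : Filter.Tendsto u atTop (nhds S)) :
    Filter.Tendsto (fun n => (c n : EReal) * u n) atTop (nhds ((c₀ : EReal) * S)) := by
  have hmul : ContinuousAt (fun p : EReal × EReal => p.1 * p.2) ((c₀ : EReal), S) := by
    apply EReal.continuousAt_mul
    · left; simp only; exact_mod_cast hc₀
    · left; simp only; exact_mod_cast hc₀
    · left; exact EReal.coe_ne_bot _
    · left; exact EReal.coe_ne_top _
  exact hmul.tendsto.comp ((EReal.tendsto_coe.2 hc).prodMk_nhds hu)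

lemma tendsto_ereal_add {u v : ℕ → EReal} {a b : EReal}
    (hu : Filter.Tendsto u atTop (nhds a)) (hv : Filter.Tendsto v atTop (nhds b))
    (ha : a ≠ ⊤) (hb : b ≠ ⊤) :
    Filter.Tendsto (fun n => u n + v n) atTop (nhds (a + b)) := by
  have hadd : ContinuousAt (fun p : EReal × EReal => p.1 + p.2) (a, b) :=
    EReal.continuousAt_add (Or.inl ha) (Or.inr hb)
  exact hadd.tendsto.comp (hu.prodMk_nhds hv)

lemma tendsto_ereal_sum {ι : Type*} (s : Finset ι) (f : ℕ → ι → EReal) (g : ι → EReal)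
    (hg : ∀ i, g i ≠ ⊤) (h : ∀ i ∈ s, Filter.Tendsto (fun n => f n i) atTop (nhds (g i))) :
    Filter.Tendsto (fun n => ∑ i ∈ s, f n i) atTop (nhds (∑ i ∈ s, g i)) := by
  classical
  induction s using Finset.induction_on with
  | empty => simp [tendsto_const_nhds]
  | @insert j s hj ih =>
    simp only [Finset.sum_insert hj]
    exact tendsto_ereal_add (h j (Finset.mem_insert_self _ _))
      (ih fun i hi => h i (Finset.mem_insert_of_mem hi)) (hg j)
      (ereal_sum_ne_top fun i _ => hg i)

lemma tendsto_of_abs_lt_one_div {f : ℕ → ℝ} {a : ℝ}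
    (h : ∀ n, |f n - a| < 1 / (n + 1)) : Filter.Tendsto f atTop (nhds a) := by
  rw [tendsto_iff_dist_tendsto_zero]
  refine squeeze_zero (fun n => dist_nonneg) (fun n => ?_) tendsto_one_div_add_atTop_nhds_zero_nat
  rw [Real.dist_eq]
  exact (h n).le

lemma coe_mul_ne_top {c : ℝ} {x : EReal} (hc : 0 ≤ c) (hx : x ≠ ⊤) :
    (c : EReal) * x ≠ ⊤ := by
  induction x using EReal.rec with
  | bot =>
    rcases eq_or_lt_of_le hc with h | h
    · simp [← h]
    · simp [EReal.coe_mul_bot_of_pos h]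
  | coe a => rw [← EReal.coe_mul]; exact EReal.coe_ne_top _
  | top => exact absurd rfl hx

lemma isCompact_paramSpace (L K : ℕ) : IsCompact (paramSpace L K) := by
  have heq : paramSpace L K = (stdSimplex ℝ (Fin L)) ×ˢ ((stdSimplex ℝ (Fin L)) ×ˢ
      (Set.univ.pi fun _ : Fin L => stdSimplex ℝ (Fin K))) := by
    ext ⟨a, b, c⟩
    simp [paramSpace, closedSimplex, stdSimplex, Set.mem_pi]
  rw [heq]
  exact (isCompact_stdSimplex _ _).prod ((isCompact_stdSimplex _ _).prod
    (isCompact_univ_pi fun _ => isCompact_stdSimplex _ _))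

lemma tendsto_weightedObjective (L K : ℕ)
    (b : ℕ → Fin L → Fin K → ℝ) (b₀ : Fin L → Fin K → ℝ)
    (d : ℕ → Fin K → ℝ) (d₀ : Fin K → ℝ) (ρ : ℕ → ℝ) (ρ₀ : ℝ)
    (θ : ℕ → (Fin L → ℝ) × (Fin L → ℝ) × (Fin L → Fin K → ℝ))
    (θ₀ : (Fin L → ℝ) × (Fin L → ℝ) × (Fin L → Fin K → ℝ))
    (hb : ∀ l k, Filter.Tendsto (fun n => b n l k) atTop (nhds (b₀ l k)))
    (hd : ∀ k, Filter.Tendsto (fun n => d n k) atTop (nhds (d₀ k)))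
    (hρ : Filter.Tendsto ρ atTop (nhds ρ₀))
    (hθ : Filter.Tendsto θ atTop (nhds θ₀))
    (hb₀ : ∀ l k, 0 < b₀ l k) (hd₀ : ∀ k, 0 < d₀ k) (hρ₀ : 0 < ρ₀)
    (hθmem : ∀ n, θ n ∈ paramSpace L K) :
    Filter.Tendsto (fun n => weightedObjective L K (b n) (d n) (ρ n) (θ n)) atTop
      (nhds (weightedObjective L K b₀ d₀ ρ₀ θ₀)) := by
  have hθ1 : ∀ l, Filter.Tendsto (fun n => (θ n).1 l) atTop (nhds (θ₀.1 l)) :=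
    fun l => tendsto_pi_nhds.1 ((continuous_fst.tendsto θ₀).comp hθ) l
  have hθ2 : ∀ l, Filter.Tendsto (fun n => (θ n).2.1 l) atTop (nhds (θ₀.2.1 l)) :=
    fun l => tendsto_pi_nhds.1
      ((continuous_fst.tendsto θ₀.2).comp ((continuous_snd.tendsto θ₀).comp hθ)) l
  have hθ3 : ∀ l k, Filter.Tendsto (fun n => (θ n).2.2 l k) atTop (nhds (θ₀.2.2 l k)) :=
    fun l k => tendsto_pi_nhds.1 (tendsto_pi_nhds.1
      ((continuous_snd.tendsto θ₀.2).comp ((continuous_snd.tendsto θ₀).comp hθ)) l) k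
  -- first term
  have hterm1 : ∀ l k, Filter.Tendsto
      (fun n => ((b n l k : ℝ) : EReal) * elog ((θ n).1 l * (θ n).2.2 l k)) atTop
      (nhds (((b₀ l k : ℝ) : EReal) * elog (θ₀.1 l * θ₀.2.2 l k))) := by
    intro l k
    refine tendsto_coe_mul (hb₀ l k).ne' (hb l k) (tendsto_elog ?_ ((hθ1 l).mul (hθ3 l k)))
    exact fun n => mul_nonneg ((hθmem n).1.1 l) (((hθmem n).2.2 l).1 k)
  have hsum1 : Filter.Tendsto
      (fun n => ∑ l, ∑ k, ((b n l k : ℝ) : EReal) * elog ((θ n).1 l * (θ n).2.2 l k)) atTop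
      (nhds (∑ l, ∑ k, ((b₀ l k : ℝ) : EReal) * elog (θ₀.1 l * θ₀.2.2 l k))) := by
    refine tendsto_ereal_sum _ _ _
      (fun l => ereal_sum_ne_top fun k _ => coe_mul_ne_top (hb₀ l k).le (elog_ne_top _))
      (fun l _ => ?_)
    exact tendsto_ereal_sum _ _ _
      (fun k => coe_mul_ne_top (hb₀ l k).le (elog_ne_top _)) (fun k _ => hterm1 l k)
  -- second term
  have hterm2 : ∀ k, Filter.Tendsto
      (fun n => ((d n k : ℝ) : EReal) * elog (∑ l, (θ n).2.1 l * (θ n).2.2 l k)) atTop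
      (nhds (((d₀ k : ℝ) : EReal) * elog (∑ l, θ₀.2.1 l * θ₀.2.2 l k))) := by
    intro k
    refine tendsto_coe_mul (hd₀ k).ne' (hd k) (tendsto_elog ?_ ?_)
    · exact fun n => Finset.sum_nonneg fun l _ =>
        mul_nonneg ((hθmem n).2.1.1 l) (((hθmem n).2.2 l).1 k)
    · exact tendsto_finset_sum _ fun l _ => (hθ2 l).mul (hθ3 l k)
  have hsum2 : Filter.Tendsto
      (fun n => ∑ k, ((d n k : ℝ) : EReal) * elog (∑ l, (θ n).2.1 l * (θ n).2.2 l k)) atTop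
      (nhds (∑ k, ((d₀ k : ℝ) : EReal) * elog (∑ l, θ₀.2.1 l * θ₀.2.2 l k))) :=
    tendsto_ereal_sum _ _ _
      (fun k => coe_mul_ne_top (hd₀ k).le (elog_ne_top _)) (fun k _ => hterm2 k)
  have hterm2' := tendsto_coe_mul hρ₀.ne' hρ hsum2
  refine tendsto_ereal_add hsum1 hterm2' ?_ ?_
  · exact ereal_sum_ne_top fun l _ =>
      ereal_sum_ne_top fun k _ => coe_mul_ne_top (hb₀ l k).le (elog_ne_top _)
  · exact coe_mul_ne_top hρ₀.le
      (ereal_sum_ne_top fun k _ => coe_mul_ne_top (hd₀ k).le (elog_ne_top _))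


/-- Uniformly over weights `(b, d, ρ)` sufficiently close to the population
weights `(π*_l φ*_{lk}, (φ*ᵀ π'*)_k)` with `ρ ∈ [ρ₁, ρ₂]`, every maximizer of `H_{b,d,ρ}`
over `Θ` lies within `ε` of `(π*, π'*, φ*)`. -/
theorem weighted_objective_maximizers_close
    (L K : ℕ) (hL : 0 < L) (hK : 0 < K)
    (πstar π'star : Fin L → ℝ) (φstar : Fin L → Fin K → ℝ)
    (hπ : openSimplex πstar) (hπ' : openSimplex π'star)
    (hφ : ∀ l, openSimplex (φstar l))
    (hrank : (Matrix.of φstar).rank = L)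
    (ρ₁ ρ₂ : ℝ) (hρ₁ : 0 < ρ₁) (hρ₁₂ : ρ₁ ≤ ρ₂) :
    ∀ ε > 0, ∃ η > 0,
      ∀ (b : Fin L → Fin K → ℝ) (d : Fin K → ℝ) (ρ : ℝ),
        (∀ l k, 0 ≤ b l k) → (∑ l, ∑ k, b l k = 1) → closedSimplex d →
        ρ₁ ≤ ρ → ρ ≤ ρ₂ →
        (∀ l k, |b l k - πstar l * φstar l k| < η) →
        (∀ k, |d k - ∑ l, φstar l k * π'star l| < η) →
        ∀ θhat ∈ paramSpace L K,
          (∀ θ ∈ paramSpace L K,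
            weightedObjective L K b d ρ θ ≤ weightedObjective L K b d ρ θhat) →
          dist θhat (πstar, π'star, φstar) < ε := by
  intro ε hε
  by_contra hcon
  push_neg at hcon
  have hcon' : ∀ n : ℕ, ∃ (b : Fin L → Fin K → ℝ) (d : Fin K → ℝ) (ρ : ℝ)
      (θhat : (Fin L → ℝ) × (Fin L → ℝ) × (Fin L → Fin K → ℝ)),
      (∀ l k, 0 ≤ b l k) ∧ (∑ l, ∑ k, b l k = 1) ∧ closedSimplex d ∧
      ρ₁ ≤ ρ ∧ ρ ≤ ρ₂ ∧
      (∀ l k, |b l k - πstar l * φstar l k| < 1 / (n + 1)) ∧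
      (∀ k, |d k - ∑ l, φstar l k * π'star l| < 1 / (n + 1)) ∧
      θhat ∈ paramSpace L K ∧
      (∀ θ ∈ paramSpace L K,
        weightedObjective L K b d ρ θ ≤ weightedObjective L K b d ρ θhat) ∧
      ε ≤ dist θhat (πstar, π'star, φstar) := by
    intro n
    have hpos : (0:ℝ) < 1 / (n + 1) := by positivity
    obtain ⟨b, d, ρ, h1, h2, h3, h4, h5, h6, h7, θhat, h8, h9, h10⟩ := hcon (1/(n+1)) hpos
    exact ⟨b, d, ρ, θhat, h1, h2, h3, h4, h5, h6, h7, h8, h9, h10⟩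
  choose bs ds ρs θs h1 h2 h3 h4 h5 h6 h7 h8 h9 h10 using hcon'
  -- compactness
  set θstar : (Fin L → ℝ) × (Fin L → ℝ) × (Fin L → Fin K → ℝ) := (πstar, π'star, φstar)
    with hθstardef
  have hθstarmem : θstar ∈ paramSpace L K :=
    ⟨⟨fun l => (hπ.1 l).le, hπ.2⟩, ⟨fun l => (hπ'.1 l).le, hπ'.2⟩,
      fun l => ⟨fun k => ((hφ l).1 k).le, (hφ l).2⟩⟩
  have hC : IsCompact ((paramSpace L K) ×ˢ (Set.Icc ρ₁ ρ₂)) :=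
    (isCompact_paramSpace L K).prod isCompact_Icc
  obtain ⟨⟨θinf, ρinf⟩, hmem, ψ, hψ, htend⟩ :=
    hC.tendsto_subseq (x := fun n => (θs n, ρs n)) (fun n => ⟨h8 n, h4 n, h5 n⟩)
  have hθt : Filter.Tendsto (fun n => θs (ψ n)) atTop (nhds θinf) :=
    (continuous_fst.tendsto _).comp htend
  have hρt : Filter.Tendsto (fun n => ρs (ψ n)) atTop (nhds ρinf) :=
    (continuous_snd.tendsto _).comp htend
  have hψt : Filter.Tendsto ψ atTop atTop := hψ.tendsto_atTop
  -- weight convergence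
  have hbt : ∀ l k, Filter.Tendsto (fun n => bs (ψ n) l k) atTop
      (nhds (πstar l * φstar l k)) :=
    fun l k => (tendsto_of_abs_lt_one_div (fun n => h6 n l k)).comp hψt
  have hdt : ∀ k, Filter.Tendsto (fun n => ds (ψ n) k) atTop
      (nhds (∑ l, φstar l k * π'star l)) :=
    fun k => (tendsto_of_abs_lt_one_div (fun n => h7 n k)).comp hψt
  -- positivity of the limit weights
  have hLne : Nonempty (Fin L) := Fin.pos_iff_nonempty.mp hL
  have hb₀ : ∀ l k, 0 < πstar l * φstar l k := fun l k => mul_pos (hπ.1 l) ((hφ l).1 k)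
  have hd₀ : ∀ k, 0 < ∑ l, φstar l k * π'star l :=
    fun k => Finset.sum_pos (fun l _ => mul_pos ((hφ l).1 k) (hπ'.1 l)) Finset.univ_nonempty
  have hρinf : 0 < ρinf := lt_of_lt_of_le hρ₁ hmem.2.1
  -- limits of the two objective sequences
  have tA : Filter.Tendsto
      (fun n => weightedObjective L K (bs (ψ n)) (ds (ψ n)) (ρs (ψ n)) θstar) atTop
      (nhds (weightedObjective L K (fun l k => πstar l * φstar l k)
        (fun k => ∑ l, φstar l k * π'star l) ρinf θstar)) :=
    tendsto_weightedObjective L K _ _ _ _ _ _ _ _ hbt hdt hρt tendsto_const_nhds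
      hb₀ hd₀ hρinf (fun _ => hθstarmem)
  have tB : Filter.Tendsto
      (fun n => weightedObjective L K (bs (ψ n)) (ds (ψ n)) (ρs (ψ n)) (θs (ψ n))) atTop
      (nhds (weightedObjective L K (fun l k => πstar l * φstar l k)
        (fun k => ∑ l, φstar l k * π'star l) ρinf θinf)) :=
    tendsto_weightedObjective L K _ _ _ _ _ _ _ _ hbt hdt hρt hθt
      hb₀ hd₀ hρinf (fun n => h8 (ψ n))
  have hkey : ∀ n, weightedObjective L K (bs (ψ n)) (ds (ψ n)) (ρs (ψ n)) θstar ≤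
      weightedObjective L K (bs (ψ n)) (ds (ψ n)) (ρs (ψ n)) (θs (ψ n)) :=
    fun n => h9 (ψ n) θstar hθstarmem
  have hle := le_of_tendsto_of_tendsto' tA tB hkey
  have heq : θinf = θstar :=
    unique_max L K hL πstar π'star φstar hπ hπ' hφ hrank ρinf hρinf θinf hmem.1 hle
  -- contradiction with the distance bound
  have hdistt : Filter.Tendsto (fun n => dist (θs (ψ n)) θstar) atTop
      (nhds (dist θinf θstar)) := hθt.dist tendsto_const_nhds
  have : ε ≤ dist θinf θstar :=
    le_of_tendsto_of_tendsto' tendsto_const_nhds hdistt (fun n => h10 (ψ n))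
  rw [heq, dist_self] at this
  linarith
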